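/- Let d ≥ 1, f : ℝ^d → ℝ, and x ∈ ℝ^d. Suppose that for every ε > 0 there exists δ > 0 such that for all v₁, v₂, v₃ ∈ ℝ^d with v₁ + v₂ + v₃ = 0 and ‖v₁‖ + ‖v₂‖ + ‖v₃‖ = 1, and all h₁, h₂, h₃ ∈ (0, δ), one has |h₂h₃·f(x + h₁v₁) + h₁h₃·f(x + h₂v₂) + h₁h₂·f(x + h₃v₃) − (h₁h₂ + h₂h₃ + h₁h₃)·f(x)| ≤ ε·h₁·h₂·h₃. Then f is Fréchet differentiable at x. -/

import Mathlib

open Filter Topology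

namespace DiffCrit

variable {d : ℕ} (f : EuclideanSpace ℝ (Fin d) → ℝ) (x : EuclideanSpace ℝ (Fin d))

noncomputable def q (v : EuclideanSpace ℝ (Fin d)) (h : ℝ) : ℝ :=
  (f (x + h • v) - f x) / h

noncomputable def D (v : EuclideanSpace ℝ (Fin d)) : ℝ :=
  limUnder (𝓝[>] (0:ℝ)) (q f x v)

def Hyp : Prop :=
  ∀ ε > (0:ℝ), ∃ δ > (0:ℝ),
    ∀ v₁ v₂ v₃ : EuclideanSpace ℝ (Fin d),
      v₁ + v₂ + v₃ = 0 → ‖v₁‖ + ‖v₂‖ + ‖v₃‖ = 1 →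
      ∀ h₁ h₂ h₃ : ℝ, h₁ ∈ Set.Ioo 0 δ → h₂ ∈ Set.Ioo 0 δ → h₃ ∈ Set.Ioo 0 δ →
        |h₂ * h₃ * f (x + h₁ • v₁) + h₁ * h₃ * f (x + h₂ • v₂) +
            h₁ * h₂ * f (x + h₃ • v₃) -
            (h₁ * h₂ + h₂ * h₃ + h₁ * h₃) * f x| ≤ ε * h₁ * h₂ * h₃

variable {f x}

lemma qsum (hyp : Hyp f x) : ∀ ε > (0:ℝ), ∃ δ > (0:ℝ),
    ∀ v₁ v₂ v₃ : EuclideanSpace ℝ (Fin d),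
      v₁ + v₂ + v₃ = 0 → ‖v₁‖ + ‖v₂‖ + ‖v₃‖ = 1 →
      ∀ h₁ h₂ h₃ : ℝ, h₁ ∈ Set.Ioo 0 δ → h₂ ∈ Set.Ioo 0 δ → h₃ ∈ Set.Ioo 0 δ →
        |q f x v₁ h₁ + q f x v₂ h₂ + q f x v₃ h₃| ≤ ε := by
  intro ε hε
  obtain ⟨δ, hδ, H⟩ := hyp ε hε
  refine ⟨δ, hδ, fun v₁ v₂ v₃ hsum hnorm h₁ h₂ h₃ hh₁ hh₂ hh₃ => ?_⟩
  have h1 := hh₁.1; have h2 := hh₂.1; have h3 := hh₃.1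
  have key := H v₁ v₂ v₃ hsum hnorm h₁ h₂ h₃ hh₁ hh₂ hh₃
  have e : h₂ * h₃ * f (x + h₁ • v₁) + h₁ * h₃ * f (x + h₂ • v₂) +
      h₁ * h₂ * f (x + h₃ • v₃) - (h₁ * h₂ + h₂ * h₃ + h₁ * h₃) * f x
      = (h₁ * h₂ * h₃) * (q f x v₁ h₁ + q f x v₂ h₂ + q f x v₃ h₃) := by
    unfold q
    field_simp
    ring
  rw [e, abs_mul, abs_of_pos (by positivity)] at key
  have hpos : (0:ℝ) < h₁ * h₂ * h₃ := by positivity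
  exact le_of_mul_le_mul_left (key.trans_eq (by ring)) hpos

lemma q_zero (h : ℝ) : q f x 0 h = 0 := by simp [q]

lemma q_smul (c : ℝ) (v : EuclideanSpace ℝ (Fin d)) (h : ℝ) (hh : h ≠ 0) :
    q f x (c • v) h = c * q f x v (c * h) := by
  rcases eq_or_ne c 0 with rfl | hc
  · simp [q]
  · unfold q
    rw [smul_smul, mul_comm h c]
    field_simp

lemma tendsto_const_mul_nhdsWithin (c : ℝ) (hc : 0 < c) :
    Tendsto (fun h : ℝ => c * h) (𝓝[>] 0) (𝓝[>] 0) := by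
  apply tendsto_nhdsWithin_of_tendsto_nhds_of_eventually_within
  · have : Tendsto (fun h : ℝ => c * h) (𝓝 0) (𝓝 (c * 0)) :=
      (tendsto_id.const_mul c)
    simpa using this.mono_left nhdsWithin_le_nhds
  · filter_upwards [self_mem_nhdsWithin] with h (hh : (0:ℝ) < h)
    exact mul_pos hc hh

lemma sum_zero_spec (u : EuclideanSpace ℝ (Fin d)) :
    u + u + (-((2:ℝ) • u)) = 0 := by module

lemma norm_sum_spec (u : EuclideanSpace ℝ (Fin d)) (hu : ‖u‖ = 1/4) :
    ‖u‖ + ‖u‖ + ‖-((2:ℝ) • u)‖ = 1 := by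
  rw [norm_neg, norm_smul]
  simp [hu]
  norm_num

lemma hD_aux (hyp : Hyp f x) (u : EuclideanSpace ℝ (Fin d)) (hu : ‖u‖ = 1/4) :
    ∃ L, Tendsto (q f x u) (𝓝[>] (0:ℝ)) (𝓝 L) := by
  have hC : Cauchy (Filter.map (q f x u) (𝓝[>] (0:ℝ))) := by
    rw [Metric.cauchy_iff]
    refine ⟨Filter.map_neBot, fun ε hε => ?_⟩
    obtain ⟨δ, hδ, H⟩ := qsum hyp (ε/3) (by positivity)
    refine ⟨q f x u '' Set.Ioo 0 δ, Filter.image_mem_map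
      (Ioo_mem_nhdsGT_of_mem ⟨le_refl 0, hδ⟩), ?_⟩
    rintro a ⟨h₁, hh₁, rfl⟩ b ⟨h₂, hh₂, rfl⟩
    have hmid : (δ/2) ∈ Set.Ioo (0:ℝ) δ := ⟨half_pos hδ, half_lt_self hδ⟩
    have k₁ := H u u (-((2:ℝ) • u)) (sum_zero_spec u) (norm_sum_spec u hu)
      h₁ (δ/2) (δ/2) hh₁ hmid hmid
    have k₂ := H u u (-((2:ℝ) • u)) (sum_zero_spec u) (norm_sum_spec u hu)
      h₂ (δ/2) (δ/2) hh₂ hmid hmid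
    rw [Real.dist_eq]
    have := abs_sub_abs_le_abs_sub (q f x u h₁ + q f x u (δ/2) + q f x (-((2:ℝ) • u)) (δ/2))
      (q f x u h₂ + q f x u (δ/2) + q f x (-((2:ℝ) • u)) (δ/2))
    have habs : |q f x u h₁ - q f x u h₂| ≤
        |q f x u h₁ + q f x u (δ/2) + q f x (-((2:ℝ) • u)) (δ/2)| +
        |q f x u h₂ + q f x u (δ/2) + q f x (-((2:ℝ) • u)) (δ/2)| := by
      have := abs_sub (q f x u h₁ + q f x u (δ/2) + q f x (-((2:ℝ) • u)) (δ/2))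
        (q f x u h₂ + q f x u (δ/2) + q f x (-((2:ℝ) • u)) (δ/2))
      calc |q f x u h₁ - q f x u h₂|
          = |(q f x u h₁ + q f x u (δ/2) + q f x (-((2:ℝ) • u)) (δ/2)) -
             (q f x u h₂ + q f x u (δ/2) + q f x (-((2:ℝ) • u)) (δ/2))| := by ring_nf
        _ ≤ _ := abs_sub _ _
    calc |q f x u h₁ - q f x u h₂| ≤ _ := habs
      _ ≤ ε/3 + ε/3 := add_le_add k₁ k₂
      _ < ε := by linarith
  obtain ⟨L, hL⟩ := CompleteSpace.complete hC
  exact ⟨L, hL⟩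

lemma hD (hyp : Hyp f x) (v : EuclideanSpace ℝ (Fin d)) :
    Tendsto (q f x v) (𝓝[>] (0:ℝ)) (𝓝 (D f x v)) := by
  have hex : ∃ L, Tendsto (q f x v) (𝓝[>] (0:ℝ)) (𝓝 L) := by
    rcases eq_or_ne v 0 with rfl | hv
    · exact ⟨0, tendsto_const_nhds.congr fun h => (q_zero (f := f) (x := x) h).symm⟩
    · set c : ℝ := 4 * ‖v‖ with hc
      have hvpos : 0 < ‖v‖ := norm_pos_iff.mpr hv
      have hcpos : 0 < c := by rw [hc]; linarith
      set u : EuclideanSpace ℝ (Fin d) := c⁻¹ • v with hu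
      have hun : ‖u‖ = 1/4 := by
        rw [hu, norm_smul, Real.norm_eq_abs, abs_inv, abs_of_pos hcpos, hc]
        field_simp
      obtain ⟨L, hL⟩ := hD_aux hyp u hun
      refine ⟨c * L, ?_⟩
      have hveq : v = c • u := by
        rw [hu, smul_smul, mul_inv_cancel₀ (ne_of_gt hcpos), one_smul]
      have h1 : Tendsto (fun h : ℝ => c * q f x u (c * h)) (𝓝[>] (0:ℝ)) (𝓝 (c * L)) :=
        (hL.comp (tendsto_const_mul_nhdsWithin c hcpos)).const_mul c
      refine h1.congr' ?_ |>.mono_left le_rfl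
      filter_upwards [self_mem_nhdsWithin] with h (hh : (0:ℝ) < h)
      rw [hveq]
      exact (q_smul c u h (ne_of_gt hh)).symm
  obtain ⟨L, hL⟩ := hex
  have : D f x v = L := hL.limUnder_eq
  rw [this]
  exact hL

lemma bound (hyp : Hyp f x) : ∀ ε > (0:ℝ), ∃ δ > (0:ℝ),
    ∀ v₁ v₂ v₃ : EuclideanSpace ℝ (Fin d),
      v₁ + v₂ + v₃ = 0 → ‖v₁‖ + ‖v₂‖ + ‖v₃‖ = 1 →
      ∀ h₁ ∈ Set.Ioo (0:ℝ) δ, |q f x v₁ h₁ + D f x v₂ + D f x v₃| ≤ ε := by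
  intro ε hε
  obtain ⟨δ, hδ, H⟩ := qsum hyp ε hε
  refine ⟨δ, hδ, fun v₁ v₂ v₃ hsum hnorm h₁ hh₁ => ?_⟩
  have htend : Tendsto (fun p : ℝ × ℝ => |q f x v₁ h₁ + q f x v₂ p.1 + q f x v₃ p.2|)
      ((𝓝[>] (0:ℝ)) ×ˢ (𝓝[>] (0:ℝ))) (𝓝 |q f x v₁ h₁ + D f x v₂ + D f x v₃|) :=
    ((tendsto_const_nhds.add ((hD hyp v₂).comp tendsto_fst)).add
      ((hD hyp v₃).comp tendsto_snd)).abs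
  refine le_of_tendsto htend ?_
  filter_upwards [Filter.prod_mem_prod (Ioo_mem_nhdsGT_of_mem ⟨le_refl 0, hδ⟩)
    (Ioo_mem_nhdsGT_of_mem ⟨le_refl 0, hδ⟩)] with p hp
  exact H v₁ v₂ v₃ hsum hnorm h₁ p.1 p.2 hh₁ hp.1 hp.2

lemma key (hyp : Hyp f x) (v₁ v₂ v₃ : EuclideanSpace ℝ (Fin d))
    (hsum : v₁ + v₂ + v₃ = 0) (hnorm : ‖v₁‖ + ‖v₂‖ + ‖v₃‖ = 1) :
    D f x v₁ + D f x v₂ + D f x v₃ = 0 := by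
  rw [← abs_nonpos_iff]
  have : ∀ ε > (0:ℝ), |D f x v₁ + D f x v₂ + D f x v₃| ≤ 0 + ε := by
    intro ε hε
    obtain ⟨δ, hδ, H⟩ := bound hyp ε hε
    have htend : Tendsto (fun h : ℝ => |q f x v₁ h + D f x v₂ + D f x v₃|)
        (𝓝[>] (0:ℝ)) (𝓝 |D f x v₁ + D f x v₂ + D f x v₃|) :=
      (((hD hyp v₁).add tendsto_const_nhds).add tendsto_const_nhds).abs
    rw [zero_add]
    refine le_of_tendsto htend ?_
    filter_upwards [Ioo_mem_nhdsGT_of_mem (⟨le_refl 0, hδ⟩ : (0:ℝ) ∈ Set.Ico 0 δ)] with h hh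
    exact H v₁ v₂ v₃ hsum hnorm h hh
  exact le_of_forall_pos_le_add this

lemma Dzero (hyp : Hyp f x) : D f x 0 = 0 :=
  tendsto_nhds_unique (hD hyp 0)
    (tendsto_const_nhds.congr fun h => (q_zero (f := f) (x := x) h).symm)

lemma Dsmul_pos (hyp : Hyp f x) (c : ℝ) (hc : 0 < c) (v : EuclideanSpace ℝ (Fin d)) :
    D f x (c • v) = c * D f x v := by
  have h1 : Tendsto (fun h : ℝ => c * q f x v (c * h)) (𝓝[>] (0:ℝ)) (𝓝 (c * D f x v)) :=
    ((hD hyp v).comp (tendsto_const_mul_nhdsWithin c hc)).const_mul c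
  refine tendsto_nhds_unique (hD hyp (c • v)) (h1.congr' ?_)
  filter_upwards [self_mem_nhdsWithin] with h (hh : (0:ℝ) < h)
  exact (q_smul c v h (ne_of_gt hh)).symm

lemma Dneg (hyp : Hyp f x) (v : EuclideanSpace ℝ (Fin d)) : D f x (-v) = -D f x v := by
  rcases eq_or_ne v 0 with rfl | hv
  · simp [Dzero hyp]
  · have hvpos : 0 < ‖v‖ := norm_pos_iff.mpr hv
    set c : ℝ := (2 * ‖v‖)⁻¹ with hc
    have hcpos : 0 < c := by rw [hc]; positivity
    set a : EuclideanSpace ℝ (Fin d) := c • v with ha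
    have han : ‖a‖ = 1/2 := by
      rw [ha, norm_smul, Real.norm_eq_abs, abs_of_pos hcpos, hc]
      field_simp
    have hk := key hyp a (-a) 0 (by simp) (by
      rw [norm_neg, norm_zero, han]; norm_num)
    rw [Dzero hyp] at hk
    have hna : D f x (-a) = -D f x a := by linarith
    have h1 : D f x a = c * D f x v := Dsmul_pos hyp c hcpos v
    have h2 : D f x (-a) = c * D f x (-v) := by
      rw [ha, ← smul_neg]; exact Dsmul_pos hyp c hcpos (-v)
    have h3 : c * D f x (-v) = c * (-D f x v) := by rw [← h2, hna, h1]; ring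
    exact mul_left_cancel₀ (ne_of_gt hcpos) h3

lemma Dadd (hyp : Hyp f x) (a b : EuclideanSpace ℝ (Fin d)) :
    D f x (a + b) = D f x a + D f x b := by
  rcases eq_or_ne a 0 with rfl | ha
  · simp [Dzero hyp]
  rcases eq_or_ne b 0 with rfl | hb
  · simp [Dzero hyp]
  rcases eq_or_ne (a + b) 0 with hab | hab
  · have hba : b = -a := by
      have := hab; rw [add_eq_zero_iff_eq_neg] at this
      linear_combination (norm := module) this
    rw [hab, hba, Dzero hyp, Dneg hyp]
    ring
  · have hapos : 0 < ‖a‖ := norm_pos_iff.mpr ha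
    have hbpos : 0 < ‖b‖ := norm_pos_iff.mpr hb
    have habpos : 0 < ‖a + b‖ := norm_pos_iff.mpr hab
    set c : ℝ := (‖a‖ + ‖b‖ + ‖a + b‖)⁻¹ with hc
    have hcpos : 0 < c := by rw [hc]; positivity
    have hk := key hyp (c • a) (c • b) (-(c • (a + b)))
      (by module)
      (by
        rw [norm_neg, norm_smul, norm_smul, norm_smul, Real.norm_eq_abs,
          abs_of_pos hcpos, hc]
        field_simp)
    rw [Dsmul_pos hyp c hcpos a, Dsmul_pos hyp c hcpos b,
      Dneg hyp, Dsmul_pos hyp c hcpos (a + b)] at hk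
    have : c * (D f x a + D f x b - D f x (a + b)) = 0 := by linarith
    have h0 := mul_eq_zero.mp this
    rcases h0 with h0 | h0
    · exact absurd h0 (ne_of_gt hcpos)
    · linarith

end DiffCrit

open Filter Topology DiffCrit in
/-- Higher-dimensional differentiability criterion of §3.3. -/
theorem diff_criterion_higher_dim
    (d : ℕ) (hd : 1 ≤ d)
    (f : EuclideanSpace ℝ (Fin d) → ℝ) (x : EuclideanSpace ℝ (Fin d))
    (hyp : ∀ ε > (0:ℝ), ∃ δ > (0:ℝ),
      ∀ v₁ v₂ v₃ : EuclideanSpace ℝ (Fin d),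
        v₁ + v₂ + v₃ = 0 → ‖v₁‖ + ‖v₂‖ + ‖v₃‖ = 1 →
        ∀ h₁ h₂ h₃ : ℝ, h₁ ∈ Set.Ioo 0 δ → h₂ ∈ Set.Ioo 0 δ → h₃ ∈ Set.Ioo 0 δ →
          |h₂ * h₃ * f (x + h₁ • v₁) + h₁ * h₃ * f (x + h₂ • v₂) +
              h₁ * h₂ * f (x + h₃ • v₃) -
              (h₁ * h₂ + h₂ * h₃ + h₁ * h₃) * f x| ≤ ε * h₁ * h₂ * h₃) :
    DifferentiableAt ℝ f x := by
  have hyp' : Hyp f x := hyp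
  set L : EuclideanSpace ℝ (Fin d) →ₗ[ℝ] ℝ :=
    { toFun := D f x
      map_add' := Dadd hyp'
      map_smul' := by
        intro c v
        simp only [RingHom.id_apply, smul_eq_mul]
        rcases lt_trichotomy c 0 with hc | hc | hc
        · have : c • v = (-c) • (-v) := by module
          rw [this, Dsmul_pos hyp' (-c) (by linarith) (-v), Dneg hyp']
          ring
        · subst hc; simp [Dzero hyp']
        · exact Dsmul_pos hyp' c hc v } with hL
  set L' := LinearMap.toContinuousLinearMap L with hL'
  have : HasFDerivAt f L' x := by
    rw [hasFDerivAt_iff_isLittleO_nhds_zero, Asymptotics.isLittleO_iff]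
    intro ε hε
    obtain ⟨δ, hδ, H⟩ := bound hyp' (ε / 4) (by positivity)
    rw [Metric.eventually_nhds_iff]
    refine ⟨δ / 4, by positivity, fun w hw => ?_⟩
    rw [dist_zero_right] at hw
    rcases eq_or_ne w 0 with rfl | hw0
    · simp
    · have hwpos : 0 < ‖w‖ := norm_pos_iff.mpr hw0
      set h : ℝ := 4 * ‖w‖ with hh
      have hhpos : 0 < h := by rw [hh]; positivity
      set u : EuclideanSpace ℝ (Fin d) := h⁻¹ • w with hu
      have hun : ‖u‖ = 1/4 := by
        rw [hu, norm_smul, Real.norm_eq_abs, abs_inv, abs_of_pos hhpos, hh]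
        field_simp
      have hweq : w = h • u := by
        rw [hu, smul_smul, mul_inv_cancel₀ (ne_of_gt hhpos), one_smul]
      have hhIoo : h ∈ Set.Ioo (0:ℝ) δ := ⟨hhpos, by rw [hh]; linarith⟩
      have B := H u u (-((2:ℝ) • u)) (sum_zero_spec u) (norm_sum_spec u hun) h hhIoo
      have hd2 : D f x (-((2:ℝ) • u)) = -(2 * D f x u) := by
        rw [Dneg hyp', Dsmul_pos hyp' 2 (by norm_num) u]
      rw [hd2] at B
      have B' : |q f x u h - D f x u| ≤ ε / 4 := by
        have : q f x u h + D f x u + -(2 * D f x u) = q f x u h - D f x u := by ring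
        rwa [this] at B
      have hLw : L' w = h * D f x u := by
        have : L' w = D f x w := rfl
        rw [this, hweq, Dsmul_pos hyp' h hhpos u]
      have hq : h * q f x u h = f (x + h • u) - f x := by
        unfold q; field_simp
      have e : f (x + w) - f x - L' w = h * (q f x u h - D f x u) := by
        rw [hLw, hweq, mul_sub, hq]
      rw [e]
      rw [Real.norm_eq_abs, abs_mul, abs_of_pos hhpos]
      calc h * |q f x u h - D f x u| ≤ h * (ε / 4) :=
            mul_le_mul_of_nonneg_left B' (le_of_lt hhpos)
        _ = ε * ‖w‖ := by rw [hh]; ring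
  exact this.differentiableAt
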